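/- For every integer n ≥ 3, the minimum number of edges in a connected 3*-dense graph on n vertices is ⌈3(n−1)/2⌉. -/

import Mathlib

open Finset

/-- A graph `G` is `k`-dense if every two adjacent vertices have at least `k - 2`
common neighbors. -/
def kDense {V : Type*} (G : SimpleGraph V) (k : ℕ) : Prop :=
  ∀ u v : V, G.Adj u v → k - 2 ≤ (G.neighborSet u ∩ G.neighborSet v).ncard

/-- A graph is `k*`-dense if it is `k`-dense but not `(k+1)`-dense. -/
def kStarDense {V : Type*} (G : SimpleGraph V) (k : ℕ) : Prop :=
  kDense G k ∧ ¬ kDense G (k + 1)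

/-! ### Lower bound -/

lemma walk_boundary {n : ℕ} {G : SimpleGraph (Fin n)} {S : Finset (Fin n)} :
    ∀ {a b : Fin n}, G.Walk a b → a ∈ S → b ∉ S →
      ∃ u v, u ∈ S ∧ v ∉ S ∧ G.Adj u v
  | _, _, .nil, ha, hb => absurd ha hb
  | _, _, .cons (v := c) h p, ha, hb => by
    by_cases hc : c ∈ S
    · exact walk_boundary p hc hb
    · exact ⟨_, _, ha, hc, h⟩

lemma exists_boundary_edge {n : ℕ} {G : SimpleGraph (Fin n)} (hp : G.Preconnected)
    {S : Finset (Fin n)} (hS : S.Nonempty) (hne : S ≠ Finset.univ) :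
    ∃ u v, u ∈ S ∧ v ∉ S ∧ G.Adj u v := by
  obtain ⟨a, ha⟩ := hS
  have : ∃ b, b ∉ S := by
    by_contra h
    push_neg at h
    exact hne (eq_univ_iff_forall.mpr h)
  obtain ⟨b, hb⟩ := this
  obtain ⟨w⟩ := hp a b
  exact walk_boundary w ha hb

lemma sym2_ne {n : ℕ} {a b c d : Fin n} (h1 : ¬(a = c ∧ b = d)) (h2 : ¬(a = d ∧ b = c)) :
    s(a, b) ≠ s(c, d) := by
  rw [Ne, Sym2.eq_iff]
  tauto

lemma grow {n : ℕ} {G : SimpleGraph (Fin n)} (hp : G.Preconnected)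
    (hd : ∀ u v, G.Adj u v → ((G.neighborSet u ∩ G.neighborSet v)).Nonempty) :
    ∀ (k : ℕ) (S : Finset (Fin n)) (F : Finset (Sym2 (Fin n))),
      (↑F : Set (Sym2 (Fin n))) ⊆ G.edgeSet →
      (∀ e ∈ F, ∀ x ∈ e, x ∈ S) →
      3 * (S.card - 1) ≤ 2 * F.card → S.Nonempty → n ≤ S.card + k →
      3 * (n - 1) ≤ 2 * G.edgeSet.ncard := by
  intro k
  induction k with
  | zero =>
    intro S F hF hin hcard hSne hk
    have hSu : S.card ≤ n := by
      simpa using Finset.card_le_card (Finset.subset_univ S)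
    have hFle : F.card ≤ G.edgeSet.ncard := by
      rw [← Set.ncard_coe_finset]
      exact Set.ncard_le_ncard hF (Set.toFinite _)
    omega
  | succ k ih =>
    intro S F hF hin hcard hSne hk
    by_cases hU : S = Finset.univ
    · have hSu : S.card = n := by rw [hU]; simp
      have hFle : F.card ≤ G.edgeSet.ncard := by
        rw [← Set.ncard_coe_finset]
        exact Set.ncard_le_ncard hF (Set.toFinite _)
      omega
    · obtain ⟨u, v, hu, hv, huv⟩ := exists_boundary_edge hp hSne hU
      obtain ⟨w, hwu, hwv⟩ := hd u v huv
      have hadjuw : G.Adj u w := hwu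
      have hadjvw : G.Adj v w := hwv
      have huv' : u ≠ v := huv.ne
      have huw : u ≠ w := hadjuw.ne
      have hvw : v ≠ w := hadjvw.ne
      have hS1 : 1 ≤ S.card := hSne.card_pos
      have hnewv : ∀ x y : Fin n, (x = v ∨ y = v) → s(x, y) ∉ F := by
        intro x y hxy hmem
        apply hv
        rcases hxy with h | h
        · subst h; exact hin _ hmem x (Sym2.mem_iff.mpr (Or.inl rfl))
        · subst h; exact hin _ hmem y (Sym2.mem_iff.mpr (Or.inr rfl))
      by_cases hwS : w ∈ S
      · -- add v, edges uv and vw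
        apply ih (insert v S) (insert s(u, v) (insert s(v, w) F))
        · intro e he
          simp only [Finset.coe_insert, Set.mem_insert_iff] at he
          rcases he with rfl | rfl | he
          · exact G.mem_edgeSet.mpr huv
          · exact G.mem_edgeSet.mpr hadjvw
          · exact hF he
        · intro e he x hx
          simp only [Finset.mem_insert] at he
          rcases he with rfl | rfl | he
          · rcases Sym2.mem_iff.mp hx with rfl | rfl
            · exact Finset.mem_insert_of_mem hu
            · exact Finset.mem_insert_self _ _
          · rcases Sym2.mem_iff.mp hx with rfl | rfl
            · exact Finset.mem_insert_self _ _
            · exact Finset.mem_insert_of_mem hwS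
          · exact Finset.mem_insert_of_mem (hin e he x hx)
        · have h1 : s(v, w) ∉ F := hnewv v w (Or.inl rfl)
          have h2 : s(u, v) ∉ insert s(v, w) F := by
            simp only [Finset.mem_insert]
            push_neg
            exact ⟨sym2_ne (fun h => huv' h.1) (fun h => huw h.1), hnewv u v (Or.inr rfl)⟩
          rw [Finset.card_insert_of_notMem h2, Finset.card_insert_of_notMem h1,
            Finset.card_insert_of_notMem hv]
          omega
        · exact ⟨v, Finset.mem_insert_self _ _⟩
        · rw [Finset.card_insert_of_notMem hv]; omega
      · -- add v and w, edges uv, uw, vw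
        have hvins : v ∉ insert w S := by
          simp only [Finset.mem_insert]
          push_neg
          exact ⟨hvw, hv⟩
        have hneww : ∀ x y : Fin n, (x = w ∨ y = w) → s(x, y) ∉ F := by
          intro x y hxy hmem
          apply hwS
          rcases hxy with h | h
          · subst h; exact hin _ hmem x (Sym2.mem_iff.mpr (Or.inl rfl))
          · subst h; exact hin _ hmem y (Sym2.mem_iff.mpr (Or.inr rfl))
        apply ih (insert v (insert w S)) (insert s(u, v) (insert s(u, w) (insert s(v, w) F)))
        · intro e he
          simp only [Finset.coe_insert, Set.mem_insert_iff] at he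
          rcases he with rfl | rfl | rfl | he
          · exact G.mem_edgeSet.mpr huv
          · exact G.mem_edgeSet.mpr hadjuw
          · exact G.mem_edgeSet.mpr hadjvw
          · exact hF he
        · intro e he x hx
          simp only [Finset.mem_insert] at he
          rcases he with rfl | rfl | rfl | he
          · rcases Sym2.mem_iff.mp hx with rfl | rfl
            · exact Finset.mem_insert_of_mem (Finset.mem_insert_of_mem hu)
            · exact Finset.mem_insert_self _ _
          · rcases Sym2.mem_iff.mp hx with rfl | rfl
            · exact Finset.mem_insert_of_mem (Finset.mem_insert_of_mem hu)
            · exact Finset.mem_insert_of_mem (Finset.mem_insert_self _ _)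
          · rcases Sym2.mem_iff.mp hx with rfl | rfl
            · exact Finset.mem_insert_self _ _
            · exact Finset.mem_insert_of_mem (Finset.mem_insert_self _ _)
          · exact Finset.mem_insert_of_mem (Finset.mem_insert_of_mem (hin e he x hx))
        · have h1 : s(v, w) ∉ F := hnewv v w (Or.inl rfl)
          have h2 : s(u, w) ∉ insert s(v, w) F := by
            simp only [Finset.mem_insert]
            push_neg
            exact ⟨sym2_ne (fun h => huv' h.1) (fun h => hvw h.2.symm),
              hneww u w (Or.inr rfl)⟩
          have h3 : s(u, v) ∉ insert s(u, w) (insert s(v, w) F) := by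
            simp only [Finset.mem_insert]
            push_neg
            exact ⟨sym2_ne (fun h => hvw h.2) (fun h => huw h.1),
              sym2_ne (fun h => huv' h.1) (fun h => huw h.1),
              hnewv u v (Or.inr rfl)⟩
          rw [Finset.card_insert_of_notMem h3, Finset.card_insert_of_notMem h2,
            Finset.card_insert_of_notMem h1, Finset.card_insert_of_notMem hvins,
            Finset.card_insert_of_notMem hwS]
          omega
        · exact ⟨v, Finset.mem_insert_self _ _⟩
        · rw [Finset.card_insert_of_notMem hvins, Finset.card_insert_of_notMem hwS]
          omega

lemma lower_bound {n : ℕ} (hn : 3 ≤ n) {G : SimpleGraph (Fin n)} (hc : G.Connected)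
    (hd : kDense G 3) : 3 * (n - 1) ≤ 2 * G.edgeSet.ncard := by
  have hd' : ∀ u v, G.Adj u v → ((G.neighborSet u ∩ G.neighborSet v)).Nonempty := by
    intro u v huv
    have := hd u v huv
    exact Set.nonempty_of_ncard_ne_zero (by omega)
  have h01 : (⟨0, by omega⟩ : Fin n) ≠ ⟨1, by omega⟩ := by
    simp [Fin.ext_iff]
  obtain ⟨p⟩ := hc.preconnected ⟨0, by omega⟩ ⟨1, by omega⟩
  obtain ⟨u, x, hux⟩ : ∃ u x : Fin n, G.Adj u x := by
    cases p with
    | cons h _ => exact ⟨_, _, h⟩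
  obtain ⟨w, hwu, hwx⟩ := hd' u x hux
  have hadjuw : G.Adj u w := hwu
  have hadjxw : G.Adj x w := hwx
  have hux' : u ≠ x := hux.ne
  have huw : u ≠ w := hadjuw.ne
  have hxw : x ≠ w := hadjxw.ne
  have hc3 : ({u, x, w} : Finset (Fin n)).card = 3 := by
    rw [Finset.card_insert_of_notMem (by simp [hux', huw]),
      Finset.card_insert_of_notMem (by simp [hxw]), Finset.card_singleton]
  have e2 : s(u, w) ∉ ({s(x, w)} : Finset (Sym2 (Fin n))) := by
    simp only [Finset.mem_singleton]
    exact sym2_ne (fun h => hux' h.1) (fun h => hxw h.2.symm)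
  have e1 : s(u, x) ∉ ({s(u, w), s(x, w)} : Finset (Sym2 (Fin n))) := by
    simp only [Finset.mem_insert, Finset.mem_singleton]
    push_neg
    exact ⟨sym2_ne (fun h => hxw h.2) (fun h => huw h.1),
      sym2_ne (fun h => hux' h.1) (fun h => huw h.1)⟩
  have hf3 : ({s(u, x), s(u, w), s(x, w)} : Finset (Sym2 (Fin n))).card = 3 := by
    rw [Finset.card_insert_of_notMem e1, Finset.card_insert_of_notMem e2,
      Finset.card_singleton]
  apply grow hc.preconnected hd' n ({u, x, w}) ({s(u, x), s(u, w), s(x, w)})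
  · intro e he
    simp only [Finset.coe_insert, Set.mem_insert_iff, Finset.coe_singleton,
      Set.mem_singleton_iff] at he
    rcases he with rfl | rfl | rfl
    · exact G.mem_edgeSet.mpr hux
    · exact G.mem_edgeSet.mpr hadjuw
    · exact G.mem_edgeSet.mpr hadjxw
  · intro e he y hy
    simp only [Finset.mem_insert, Finset.mem_singleton] at he ⊢
    rcases he with rfl | rfl | rfl <;>
      rcases Sym2.mem_iff.mp hy with rfl | rfl <;> tauto
  · rw [hc3, hf3]
  · exact ⟨u, Finset.mem_insert_self _ _⟩
  · rw [hc3]; omega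

/-! ### The extremal construction: hub 0 joined to everything, a matching
(1,2), (3,4), ..., and when n is even an extra edge (1, n-1). -/

def valAdj (n a b : ℕ) : Prop :=
  a ≠ b ∧ (a = 0 ∨ b = 0 ∨ (a + 1 = b ∧ a % 2 = 1) ∨ (b + 1 = a ∧ b % 2 = 1) ∨
    (n % 2 = 0 ∧ ((a = 1 ∧ b + 1 = n) ∨ (b = 1 ∧ a + 1 = n))))

instance (n a b : ℕ) : Decidable (valAdj n a b) := by
  unfold valAdj; infer_instance

def myGraph (n : ℕ) : SimpleGraph (Fin n) where
  Adj i j := valAdj n i.val j.val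
  symm := by constructor; intro i j h; unfold valAdj at *; omega
  loopless := by constructor; intro i h; unfold valAdj at h; omega

instance (n : ℕ) : DecidableRel (myGraph n).Adj :=
  fun i j => inferInstanceAs (Decidable (valAdj n i.val j.val))

lemma myGraph_adj {n : ℕ} {i j : Fin n} : (myGraph n).Adj i j ↔ valAdj n i.val j.val :=
  Iff.rfl

lemma adj_hub {n : ℕ} (hn : 3 ≤ n) {v : Fin n} (hv : v.val ≠ 0) :
    (myGraph n).Adj v ⟨0, by omega⟩ := by
  show valAdj n v.val 0
  unfold valAdj
  omega

lemma myGraph_connected {n : ℕ} (hn : 3 ≤ n) : (myGraph n).Connected := by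
  rw [SimpleGraph.connected_iff]
  refine ⟨?_, ⟨⟨0, by omega⟩⟩⟩
  intro u v
  by_cases hu : u.val = 0
  · by_cases hv : v.val = 0
    · have : u = v := Fin.ext (by omega)
      rw [this]
    · have hu' : u = ⟨0, by omega⟩ := Fin.ext hu
      rw [hu']
      exact ((adj_hub hn hv).symm).reachable
  · by_cases hv : v.val = 0
    · have hv' : v = ⟨0, by omega⟩ := Fin.ext hv
      rw [hv']
      exact (adj_hub hn hu).reachable
    · exact ((adj_hub hn hu).reachable).trans ((adj_hub hn hv).symm).reachable

/-- common neighbor at value level -/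
lemma common_nbr_val {n : ℕ} (hn : 3 ≤ n) {a b : ℕ} (ha : a < n) (hb : b < n)
    (hlt : a < b) (hab : valAdj n a b) :
    ∃ c, c < n ∧ valAdj n a c ∧ valAdj n b c := by
  obtain ⟨hne, hcase⟩ := hab
  by_cases ha0 : a = 0
  · subst ha0
    by_cases hb2 : b % 2 = 1
    · by_cases hb1 : b + 1 < n
      · exact ⟨b + 1, by omega, by unfold valAdj; omega, by unfold valAdj; omega⟩
      · exact ⟨1, by omega, by unfold valAdj; omega, by unfold valAdj; omega⟩
    · exact ⟨b - 1, by omega, by unfold valAdj; omega, by unfold valAdj; omega⟩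
  · exact ⟨0, by omega, by unfold valAdj; omega, by unfold valAdj; omega⟩

lemma myGraph_dense3 {n : ℕ} (hn : 3 ≤ n) : kDense (myGraph n) 3 := by
  intro u v huv
  have hval : valAdj n u.val v.val := huv
  suffices h : ∃ w : Fin n, (myGraph n).Adj u w ∧ (myGraph n).Adj v w by
    obtain ⟨w, h1, h2⟩ := h
    have hw : w ∈ (myGraph n).neighborSet u ∩ (myGraph n).neighborSet v := ⟨h1, h2⟩
    have := (Set.ncard_pos (Set.toFinite _)).mpr ⟨w, hw⟩
    omega
  rcases Nat.lt_trichotomy u.val v.val with hlt | heq | hgt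
  · obtain ⟨c, hc, h1, h2⟩ := common_nbr_val hn u.isLt v.isLt hlt hval
    exact ⟨⟨c, hc⟩, h1, h2⟩
  · exact absurd heq hval.1
  · have hval' : valAdj n v.val u.val := by unfold valAdj at *; omega
    obtain ⟨c, hc, h1, h2⟩ := common_nbr_val hn v.isLt u.isLt hgt hval'
    exact ⟨⟨c, hc⟩, h2, h1⟩

lemma myGraph_not_dense4 {n : ℕ} (hn : 3 ≤ n) : ¬ kDense (myGraph n) 4 := by
  intro h
  set u : Fin n := ⟨1, by omega⟩
  set v : Fin n := ⟨2, by omega⟩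
  have huv : (myGraph n).Adj u v := by
    show valAdj n 1 2
    unfold valAdj
    omega
  have hsub : (myGraph n).neighborSet u ∩ (myGraph n).neighborSet v ⊆
      {(⟨0, by omega⟩ : Fin n)} := by
    rintro x ⟨hx1, hx2⟩
    have h1 : valAdj n 1 x.val := hx1
    have h2 : valAdj n 2 x.val := hx2
    unfold valAdj at h1 h2
    have : x.val = 0 := by omega
    simp only [Set.mem_singleton_iff]
    exact Fin.ext this
  have hle := Set.ncard_le_ncard hsub (Set.toFinite _)
  rw [Set.ncard_singleton] at hle
  have := h u v huv
  omega

lemma pair_card_le {n : ℕ} (a b : Fin n) : ({a, b} : Finset (Fin n)).card ≤ 2 := by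
  have h1 := Finset.card_insert_le a ({b} : Finset (Fin n))
  simp at h1 ⊢
  omega

lemma triple_card_le {n : ℕ} (a b c : Fin n) : ({a, b, c} : Finset (Fin n)).card ≤ 3 := by
  have h1 := Finset.card_insert_le a ({b, c} : Finset (Fin n))
  have h2 := Finset.card_insert_le b ({c} : Finset (Fin n))
  simp at h1 h2 ⊢
  omega

lemma deg_le_two {n : ℕ} (hn : 3 ≤ n) (v : Fin n) (hv : 2 ≤ v.val) :
    (myGraph n).degree v ≤ 2 := by
  have hvlt := v.isLt
  set c : ℕ := if v.val % 2 = 0 then v.val - 1 else if v.val + 1 < n then v.val + 1 else 1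
    with hcdef
  have hc : c < n := by rw [hcdef]; split_ifs <;> omega
  have hsub : (myGraph n).neighborFinset v ⊆ {⟨0, by omega⟩, ⟨c, hc⟩} := by
    intro x hx
    have h : valAdj n v.val x.val := (SimpleGraph.mem_neighborFinset _ _ _).mp hx
    have hxlt := x.isLt
    unfold valAdj at h
    have hval : x.val = 0 ∨ x.val = c := by
      rw [hcdef]
      by_cases hp : v.val % 2 = 0
      · simp only [hp, if_true]
        omega
      · by_cases hq : v.val + 1 < n
        · simp only [hp, hq, if_false, if_true]
          omega
        · simp only [hp, hq, if_false]
          omega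
    simp only [Finset.mem_insert, Finset.mem_singleton]
    rcases hval with h0 | h0
    · exact Or.inl (Fin.ext h0)
    · exact Or.inr (Fin.ext h0)
  exact le_trans (Finset.card_le_card hsub) (pair_card_le _ _)

lemma deg_le_three {n : ℕ} (hn : 3 ≤ n) :
    (myGraph n).degree (⟨1, by omega⟩ : Fin n) ≤ 3 := by
  have hsub : (myGraph n).neighborFinset (⟨1, by omega⟩ : Fin n) ⊆
      {⟨0, by omega⟩, ⟨2, by omega⟩, ⟨n - 1, by omega⟩} := by
    intro x hx
    have h : valAdj n 1 x.val := (SimpleGraph.mem_neighborFinset _ _ _).mp hx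
    have hxlt := x.isLt
    unfold valAdj at h
    have hval : x.val = 0 ∨ x.val = 2 ∨ x.val = n - 1 := by omega
    simp only [Finset.mem_insert, Finset.mem_singleton]
    rcases hval with h0 | h0 | h0
    · exact Or.inl (Fin.ext h0)
    · exact Or.inr (Or.inl (Fin.ext h0))
    · exact Or.inr (Or.inr (Fin.ext h0))
  exact le_trans (Finset.card_le_card hsub) (triple_card_le _ _ _)

lemma sum_deg_le {n : ℕ} (hn : 3 ≤ n) :
    ∑ v : Fin n, (myGraph n).degree v ≤ 3 * n - 2 := by
  have hb : ∀ v : Fin n, (myGraph n).degree v ≤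
      2 + (if v = (⟨0, by omega⟩ : Fin n) then n - 3 else 0)
        + (if v = (⟨1, by omega⟩ : Fin n) then 1 else 0) := by
    intro v
    by_cases h0 : v = (⟨0, by omega⟩ : Fin n)
    · have hd : (myGraph n).degree v < n := by
        have := SimpleGraph.degree_lt_card_verts (G := myGraph n) v
        simpa using this
      have h01 : v ≠ (⟨1, by omega⟩ : Fin n) := by
        rw [h0]; simp [Fin.ext_iff]
      simp only [h0, if_true]
      rw [if_neg (h0 ▸ h01)]
      omega
    · by_cases h1 : v = (⟨1, by omega⟩ : Fin n)
      · have hd : (myGraph n).degree v ≤ 3 := h1 ▸ deg_le_three hn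
        rw [if_neg h0, if_pos h1]
        omega
      · have hv : 2 ≤ v.val := by
          rcases Nat.lt_or_ge v.val 2 with h | h
          · interval_cases hh : v.val
            · exact absurd (Fin.ext hh) h0
            · exact absurd (Fin.ext hh) h1
          · exact h
        have hd := deg_le_two hn v hv
        rw [if_neg h0, if_neg h1]
        omega
  calc ∑ v : Fin n, (myGraph n).degree v
      ≤ ∑ v : Fin n, (2 + (if v = (⟨0, by omega⟩ : Fin n) then n - 3 else 0)
        + (if v = (⟨1, by omega⟩ : Fin n) then 1 else 0)) :=
        Finset.sum_le_sum (fun v _ => hb v)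
    _ = 3 * n - 2 := by
        rw [Finset.sum_add_distrib, Finset.sum_add_distrib]
        rw [Finset.sum_const, Finset.sum_ite_eq' Finset.univ _ (fun _ => n - 3),
          Finset.sum_ite_eq' Finset.univ _ (fun _ => 1)]
        simp only [Finset.mem_univ, if_true, Finset.card_univ, Fintype.card_fin,
          smul_eq_mul]
        omega

lemma myGraph_card {n : ℕ} (hn : 3 ≤ n) :
    (myGraph n).edgeSet.ncard = (3 * (n - 1) + 1) / 2 := by
  have hl := lower_bound hn (myGraph_connected hn) (myGraph_dense3 hn)
  have hs := SimpleGraph.sum_degrees_eq_twice_card_edges (myGraph n)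
  have hu := sum_deg_le hn
  have hconv : (myGraph n).edgeSet.ncard = (myGraph n).edgeFinset.card := by
    simp [SimpleGraph.edgeFinset, Set.ncard_eq_toFinset_card']
  omega

theorem min_edges_threeStarDense (n : ℕ) (hn : 3 ≤ n) :
    IsLeast {m : ℕ | ∃ G : SimpleGraph (Fin n),
        G.Connected ∧ kStarDense G 3 ∧ G.edgeSet.ncard = m}
      ((3 * (n - 1) + 1) / 2) := by
  constructor
  · exact ⟨myGraph n, myGraph_connected hn,
      ⟨myGraph_dense3 hn, myGraph_not_dense4 hn⟩, myGraph_card hn⟩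
  · rintro m ⟨G, hc, ⟨hd, _⟩, rfl⟩
    have h := lower_bound hn hc hd
    omega
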